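/- arXiv:0811.1172 — 4 statements merged into one kernel-verified Lean document; each statement's English description precedes it below -/
import Mathlib

section
/- Let A_{-2},…,A_2 ∈ ℂ with A_2 ≠ 0, let α ∈ ℂ satisfy α² = -A_2, set μ = -A_1/(2α), and let N ∈ ℕ. Let a_0, a_1, …, a_N ∈ ℂ (with the convention a_{-1} = a_{-2} = 0) satisfy the recurrence 2αm·a_m = (m-μ)(m-1-μ)a_{m-1} + A_0 a_{m-1} + A_{-1} a_{m-2} + A_{-2} a_{m-3} for 1 ≤ m ≤ N. Define w(z) = exp(αz) Σ_{m=0}^{N} a_m z^{μ-m} for z > 0. Then for all z > 0: z² w''(z) + (Σ_{p=-2}^{2} A_p z^p) w(z) = exp(αz)·[ (((μ-N)(μ-N-1)+A_0)a_N + A_{-1} a_{N-1} + A_{-2} a_{N-2}) z^{μ-N} + (A_{-1} a_N + A_{-2} a_{N-1}) z^{μ-N-1} + A_{-2} a_N z^{μ-N-2} ]. -/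
lemma dche_key_sum (Am2 Am1 A0 α μ : ℂ) (N : ℕ) (a u : ℤ → ℂ)
    (ham1 : a (-1) = 0) (ham2 : a (-2) = 0)
    (hrec : ∀ m : ℤ, 1 ≤ m → m ≤ (N : ℤ) →
      2 * α * (m : ℂ) * a m =
        ((m : ℂ) - μ) * ((m : ℂ) - 1 - μ) * a (m - 1) + A0 * a (m - 1) +
          Am1 * a (m - 2) + Am2 * a (m - 3)) :
    ∑ m ∈ Finset.range (N + 1),
        a (m : ℤ) * (-(2 * α * (m : ℂ)) * u ((m : ℤ) - 1)
          + ((μ - (m : ℂ)) * (μ - (m : ℂ) - 1) + A0) * u (m : ℤ)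
          + Am1 * u ((m : ℤ) + 1) + Am2 * u ((m : ℤ) + 2)) =
      (((μ - (N : ℂ)) * (μ - (N : ℂ) - 1) + A0) * a (N : ℤ) + Am1 * a ((N : ℤ) - 1)
          + Am2 * a ((N : ℤ) - 2)) * u (N : ℤ)
        + (Am1 * a (N : ℤ) + Am2 * a ((N : ℤ) - 1)) * u ((N : ℤ) + 1)
        + Am2 * a (N : ℤ) * u ((N : ℤ) + 2) := by
  induction N with
  | zero =>
    simp only [Finset.sum_range_one, Nat.cast_zero]
    norm_num [ham1, ham2]
    ring
  | succ n ih =>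
    rw [Finset.sum_range_succ, ih (fun m h1 h2 => hrec m h1 (by omega))]
    have hr := hrec ((n : ℤ) + 1) (by omega) (by push_cast; omega)
    push_cast at hr ⊢
    simp only [show (n : ℤ) + 1 - 1 = (n : ℤ) from by ring,
      show (n : ℤ) + 1 - 2 = (n : ℤ) - 1 from by ring,
      show (n : ℤ) + 1 - 3 = (n : ℤ) - 2 from by ring,
      show (n : ℤ) + 1 + 1 = (n : ℤ) + 2 from by ring,
      show (n : ℤ) + 1 + 2 = (n : ℤ) + 3 from by ring] at hr ⊢
    linear_combination (-(u (n : ℤ))) * hr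

lemma dche_hasDerivAt_cpow_real (c : ℂ) {z : ℝ} (hz : 0 < z) :
    HasDerivAt (fun y : ℝ => (y : ℂ) ^ c) (c * (z : ℂ) ^ (c - 1)) z := by
  have h0 : (z : ℂ) ∈ Complex.slitPlane := by
    rw [Complex.mem_slitPlane_iff]
    left; simpa using hz
  exact (Complex.hasStrictDerivAt_cpow_const h0).hasDerivAt.comp_ofReal

/-- a truncation `w(z) = e^{αz} Σ_{m=0}^{N} a_m z^{μ-m}` of the formal
solution at `z = ∞` of the DCHE (with `α² = -A₂`, `μ = -A₁/(2α)`, and coefficients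
satisfying the recurrence `2αm a_m = (m-μ)(m-1-μ)a_{m-1} + A₀ a_{m-1} + A_{-1} a_{m-2}
+ A_{-2} a_{m-3}`) satisfies the equation exactly up to three explicit boundary terms. -/
theorem dche_truncated_formal_infinity_residual
    (Am2 Am1 A0 A1 A2 α μ : ℂ) (hA2 : A2 ≠ 0)
    (hα : α ^ 2 = -A2) (hμ : μ = -A1 / (2 * α)) (N : ℕ)
    (a : ℤ → ℂ) (ham1 : a (-1) = 0) (ham2 : a (-2) = 0)
    (hrec : ∀ m : ℤ, 1 ≤ m → m ≤ (N : ℤ) →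
      2 * α * (m : ℂ) * a m =
        ((m : ℂ) - μ) * ((m : ℂ) - 1 - μ) * a (m - 1) + A0 * a (m - 1) +
          Am1 * a (m - 2) + Am2 * a (m - 3))
    (w : ℝ → ℂ)
    (hw : ∀ z : ℝ, w z =
      Complex.exp (α * z) * ∑ m ∈ Finset.range (N + 1), a (m : ℤ) * (z : ℂ) ^ (μ - (m : ℂ))) :
    ∀ z : ℝ, 0 < z →
      (z : ℂ) ^ 2 * deriv (deriv w) z +
        (Am2 / (z : ℂ) ^ 2 + Am1 / (z : ℂ) + A0 + A1 * (z : ℂ) + A2 * (z : ℂ) ^ 2) * w z =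
      Complex.exp (α * z) *
        ((((μ - (N : ℂ)) * (μ - (N : ℂ) - 1) + A0) * a (N : ℤ) +
            Am1 * a ((N : ℤ) - 1) + Am2 * a ((N : ℤ) - 2)) * (z : ℂ) ^ (μ - (N : ℂ)) +
          (Am1 * a (N : ℤ) + Am2 * a ((N : ℤ) - 1)) * (z : ℂ) ^ (μ - (N : ℂ) - 1) +
          Am2 * a (N : ℤ) * (z : ℂ) ^ (μ - (N : ℂ) - 2)) := by
  intro z hz
  have hz0 : (z : ℂ) ≠ 0 := by exact_mod_cast hz.ne'
  have hα0 : α ≠ 0 := by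
    intro h
    apply hA2
    have := hα
    rw [h] at this
    simpa using this.symm
  have hA1 : A1 = -(2 * α * μ) := by
    rw [hμ]; field_simp
  have hA2' : A2 = -(α ^ 2) := by linear_combination hα
  -- the three sums
  set g : ℝ → ℂ := fun y => ∑ m ∈ Finset.range (N + 1), a (m : ℤ) * (y : ℂ) ^ (μ - (m : ℂ))
    with hg_def
  set g1 : ℝ → ℂ := fun y => ∑ m ∈ Finset.range (N + 1),
      a (m : ℤ) * ((μ - (m : ℂ)) * (y : ℂ) ^ (μ - (m : ℂ) - 1)) with hg1_def
  set g2 : ℝ → ℂ := fun y => ∑ m ∈ Finset.range (N + 1),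
      a (m : ℤ) * ((μ - (m : ℂ)) * ((μ - (m : ℂ) - 1) * (y : ℂ) ^ (μ - (m : ℂ) - 1 - 1)))
    with hg2_def
  have hwg : w = fun y : ℝ => Complex.exp (α * y) * g y := funext hw
  have hE : ∀ y : ℝ, HasDerivAt (fun t : ℝ => Complex.exp (α * t))
      (α * Complex.exp (α * y)) y := by
    intro y
    have h1 : HasDerivAt (fun t : ℂ => Complex.exp (α * t))
        (Complex.exp (α * (y : ℂ)) * (α * 1)) (y : ℂ) :=
      ((hasDerivAt_id ((y : ℝ) : ℂ)).const_mul α).cexp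
    simpa [mul_comm] using h1.comp_ofReal
  have hg : ∀ y : ℝ, 0 < y → HasDerivAt g (g1 y) y := by
    intro y hy
    exact HasDerivAt.fun_sum fun m _ =>
      (dche_hasDerivAt_cpow_real (μ - (m : ℂ)) hy).const_mul (a (m : ℤ))
  have hg1 : ∀ y : ℝ, 0 < y → HasDerivAt g1 (g2 y) y := by
    intro y hy
    exact HasDerivAt.fun_sum fun m _ =>
      (((dche_hasDerivAt_cpow_real (μ - (m : ℂ) - 1) hy).const_mul
        (μ - (m : ℂ))).const_mul (a (m : ℤ)))
  set w1 : ℝ → ℂ := fun y => α * Complex.exp (α * y) * g y + Complex.exp (α * y) * g1 y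
    with hw1_def
  have hw' : ∀ y : ℝ, 0 < y → HasDerivAt w (w1 y) y := by
    intro y hy
    rw [hwg]
    have := (hE y).fun_mul (hg y hy)
    simpa [hw1_def] using this
  have hdw : deriv w =ᶠ[nhds z] w1 := by
    filter_upwards [Ioi_mem_nhds hz] with y hy using (hw' y hy).deriv
  have hw1' : HasDerivAt w1
      (α * (α * Complex.exp (α * z)) * g z + α * Complex.exp (α * z) * g1 z +
        (α * Complex.exp (α * z) * g1 z + Complex.exp (α * z) * g2 z)) z := by
    have h1 : HasDerivAt (fun y : ℝ => α * Complex.exp (α * y) * g y)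
        (α * (α * Complex.exp (α * z)) * g z + α * Complex.exp (α * z) * g1 z) z := by
      have := ((hE z).const_mul α).fun_mul (hg z hz)
      simpa [mul_assoc, mul_comm, mul_left_comm] using this
    have h2 : HasDerivAt (fun y : ℝ => Complex.exp (α * y) * g1 y)
        (α * Complex.exp (α * z) * g1 z + Complex.exp (α * z) * g2 z) z :=
      (hE z).mul (hg1 z hz)
    exact h1.add h2
  have hdd : deriv (deriv w) z =
      α * (α * Complex.exp (α * z)) * g z + α * Complex.exp (α * z) * g1 z +
        (α * Complex.exp (α * z) * g1 z + Complex.exp (α * z) * g2 z) := by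
    rw [hdw.deriv_eq, hw1'.deriv]
  rw [hdd, hwg, hA1, hA2']
  -- algebra with sums
  set u : ℤ → ℂ := fun k => (z : ℂ) ^ (μ - (k : ℂ)) with hu_def
  have hkey := dche_key_sum Am2 Am1 A0 α μ N a u ham1 ham2 hrec
  have hX : (z : ℂ) ^ 2 * (α * α * g z) + 2 * α * (z : ℂ) ^ 2 * g1 z + (z : ℂ) ^ 2 * g2 z +
      (Am2 / (z : ℂ) ^ 2 + Am1 / (z : ℂ) + A0 + -(2 * α * μ) * (z : ℂ) +
        -(α ^ 2) * (z : ℂ) ^ 2) * g z =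
      ∑ m ∈ Finset.range (N + 1),
        a (m : ℤ) * (-(2 * α * (m : ℂ)) * u ((m : ℤ) - 1)
          + ((μ - (m : ℂ)) * (μ - (m : ℂ) - 1) + A0) * u (m : ℤ)
          + Am1 * u ((m : ℤ) + 1) + Am2 * u ((m : ℤ) + 2)) := by
    simp only [hg_def, hg1_def, hg2_def, hu_def, Finset.mul_sum]
    rw [← Finset.sum_add_distrib, ← Finset.sum_add_distrib, ← Finset.sum_add_distrib]
    refine Finset.sum_congr rfl fun m _ => ?_
    push_cast
    rw [show μ - (m : ℂ) - 1 - 1 = μ - (m : ℂ) - 2 from by ring,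
      show μ - ((m : ℂ) - 1) = μ - (m : ℂ) + 1 from by ring,
      show μ - ((m : ℂ) + 1) = μ - (m : ℂ) - 1 from by ring,
      show μ - ((m : ℂ) + 2) = μ - (m : ℂ) - 2 from by ring]
    have hp1 : (z : ℂ) ^ (μ - (m : ℂ) - 1) = (z : ℂ) ^ (μ - (m : ℂ) - 2) * z := by
      conv_lhs => rw [show μ - (m : ℂ) - 1 = (μ - (m : ℂ) - 2) + 1 from by ring]
      rw [Complex.cpow_add _ _ hz0, Complex.cpow_one]
    have hp0 : (z : ℂ) ^ (μ - (m : ℂ)) = (z : ℂ) ^ (μ - (m : ℂ) - 2) * z * z := by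
      conv_lhs => rw [show μ - (m : ℂ) = (μ - (m : ℂ) - 2) + 1 + 1 from by ring]
      rw [Complex.cpow_add _ _ hz0, Complex.cpow_add _ _ hz0, Complex.cpow_one]
    have hpp : (z : ℂ) ^ (μ - (m : ℂ) + 1) = (z : ℂ) ^ (μ - (m : ℂ) - 2) * z * z * z := by
      conv_lhs => rw [show μ - (m : ℂ) + 1 = (μ - (m : ℂ) - 2) + 1 + 1 + 1 from by ring]
      rw [Complex.cpow_add _ _ hz0, Complex.cpow_add _ _ hz0, Complex.cpow_add _ _ hz0,
        Complex.cpow_one]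
    rw [hpp, hp0, hp1]
    field_simp
    ring
  calc (z : ℂ) ^ 2 *
        (α * (α * Complex.exp (α * z)) * g z + α * Complex.exp (α * z) * g1 z +
          (α * Complex.exp (α * z) * g1 z + Complex.exp (α * z) * g2 z)) +
        (Am2 / (z : ℂ) ^ 2 + Am1 / (z : ℂ) + A0 + -(2 * α * μ) * (z : ℂ) +
          -(α ^ 2) * (z : ℂ) ^ 2) * ((fun y : ℝ => Complex.exp (α * y) * g y) z)
      = Complex.exp (α * z) *
        ((z : ℂ) ^ 2 * (α * α * g z) + 2 * α * (z : ℂ) ^ 2 * g1 z + (z : ℂ) ^ 2 * g2 z +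
          (Am2 / (z : ℂ) ^ 2 + Am1 / (z : ℂ) + A0 + -(2 * α * μ) * (z : ℂ) +
            -(α ^ 2) * (z : ℂ) ^ 2) * g z) := by ring
    _ = Complex.exp (α * z) *
        ((((μ - (N : ℂ)) * (μ - (N : ℂ) - 1) + A0) * a (N : ℤ) + Am1 * a ((N : ℤ) - 1)
            + Am2 * a ((N : ℤ) - 2)) * u (N : ℤ)
          + (Am1 * a (N : ℤ) + Am2 * a ((N : ℤ) - 1)) * u ((N : ℤ) + 1)
          + Am2 * a (N : ℤ) * u ((N : ℤ) + 2)) := by rw [hX, hkey]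
    _ = _ := by
        simp only [hu_def]
        push_cast
        rw [show μ - ((N : ℂ) + 1) = μ - (N : ℂ) - 1 from by ring,
          show μ - ((N : ℂ) + 2) = μ - (N : ℂ) - 2 from by ring]
end

section
/- Let A_{-2},…,A_2 ∈ ℂ with A_{-2} ≠ 0, let β ∈ ℂ satisfy β² = -A_{-2}, set ρ = 1 + A_{-1}/(2β), and let N ∈ ℕ. Let b_0, b_1, …, b_N ∈ ℂ (with the convention b_{-1} = b_{-2} = 0) satisfy the recurrence 2βm·b_m = (m-1+ρ)(m-2+ρ)b_{m-1} + A_0 b_{m-1} + A_1 b_{m-2} + A_2 b_{m-3} for 1 ≤ m ≤ N. Define w(z) = exp(β/z) Σ_{m=0}^{N} b_m z^{ρ+m} for z > 0. Then for all z > 0: z² w''(z) + (Σ_{p=-2}^{2} A_p z^p) w(z) = exp(β/z)·[ (((N+ρ)(N-1+ρ)+A_0)b_N + A_1 b_{N-1} + A_2 b_{N-2}) z^{ρ+N} + (A_1 b_N + A_2 b_{N-1}) z^{ρ+N+1} + A_2 b_N z^{ρ+N+2} ]. -/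
open Complex Finset

lemma dche_hasDerivAt_ofReal_cpow' (c : ℂ) {z : ℝ} (hz : z ≠ 0) :
    HasDerivAt (fun y : ℝ => (y : ℂ) ^ c) (c * (z : ℂ) ^ (c - 1)) z := by
  rcases eq_or_ne c 0 with rfl | hc
  · simpa using (hasDerivAt_const z (1 : ℂ)).congr_of_eventuallyEq
      (Filter.Eventually.of_forall fun y => by simp [Complex.cpow_zero])
  · have h := (hasDerivAt_ofReal_cpow_const' hz (r := c - 1) (by
      intro h; apply hc; linear_combination h)).const_mul c
    simp only [sub_add_cancel] at h
    exact h.congr_of_eventuallyEq (Filter.Eventually.of_forall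
      (fun y => by field_simp))

lemma dche_hasDerivAt_cexp_div (β : ℂ) {z : ℝ} (hz : z ≠ 0) :
    HasDerivAt (fun y : ℝ => Complex.exp (β / y))
      (Complex.exp (β / z) * (-β / (z : ℂ) ^ 2)) z := by
  have hz' : (z : ℂ) ≠ 0 := Complex.ofReal_ne_zero.mpr hz
  have h2 : HasDerivAt (fun y : ℝ => ((y:ℂ))⁻¹) (-((z:ℂ)^2)⁻¹) z :=
    (hasDerivAt_inv hz').comp_ofReal
  have h3 := (h2.const_mul β).cexp
  have h4 : HasDerivAt (fun y : ℝ => Complex.exp (β / y))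
      (Complex.exp (β * ((z:ℂ))⁻¹) * (β * -((z:ℂ)^2)⁻¹)) z :=
    h3.congr_of_eventuallyEq (Filter.Eventually.of_forall fun y => by
      simp [div_eq_mul_inv])
  have : Complex.exp (β / z) * (-β / (z : ℂ) ^ 2)
      = Complex.exp (β * ((z:ℂ))⁻¹) * (β * -((z:ℂ)^2)⁻¹) := by
    rw [div_eq_mul_inv β (z:ℂ)]; ring
  rw [this]; exact h4

lemma dche_tele_aux (β ρ A0 A1 A2 P x : ℂ) (b : ℤ → ℂ)
    (hbm1 : b (-1) = 0) (hbm2 : b (-2) = 0) (N : ℕ)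
    (hrec : ∀ m : ℤ, 1 ≤ m → m ≤ (N : ℤ) →
      2 * β * (m : ℂ) * b m =
        ((m : ℂ) - 1 + ρ) * ((m : ℂ) - 2 + ρ) * b (m - 1) + A0 * b (m - 1) +
          A1 * b (m - 2) + A2 * b (m - 3)) :
    ∀ n : ℕ, n ≤ N →
    ∑ m ∈ Finset.range (n + 1),
      ((-(2 * β * (m : ℂ))) * b (m : ℤ) * P * x ^ (m + 3)
        + (((m : ℂ) + ρ) * ((m : ℂ) - 1 + ρ) + A0) * b (m : ℤ) * P * x ^ (m + 4)
        + A1 * b (m : ℤ) * P * x ^ (m + 5)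
        + A2 * b (m : ℤ) * P * x ^ (m + 6))
    = ((((n : ℂ) + ρ) * ((n : ℂ) - 1 + ρ) + A0) * b (n : ℤ)
          + A1 * b ((n : ℤ) - 1) + A2 * b ((n : ℤ) - 2)) * P * x ^ (n + 4)
      + (A1 * b (n : ℤ) + A2 * b ((n : ℤ) - 1)) * P * x ^ (n + 5)
      + A2 * b (n : ℤ) * P * x ^ (n + 6) := by
  intro n
  induction n with
  | zero =>
    intro _
    norm_num [Finset.sum_range_one, hbm1, hbm2]
  | succ k ih =>
    intro hn
    rw [Finset.sum_range_succ, ih (by omega)]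
    have hr := hrec ((k : ℤ) + 1) (by omega) (by omega)
    push_cast at hr
    have hb1 : ((k + 1 : ℕ) : ℤ) = (k : ℤ) + 1 := by push_cast; ring
    rw [hb1]
    push_cast
    simp only [show ((k:ℤ) + 1 - 1) = (k:ℤ) from by ring,
        show ((k:ℤ) + 1 - 2) = (k:ℤ) - 1 from by ring,
        show ((k:ℤ) + 1 - 3) = (k:ℤ) - 2 from by ring] at hr ⊢
    linear_combination (-(P * x ^ (k + 4))) * hr

/-- a truncation `w(z) = e^{β/z} Σ_{m=0}^{N} b_m z^{ρ+m}` of the formal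
solution at `z = 0` of the DCHE (with `β² = -A_{-2}`, `ρ = 1 + A_{-1}/(2β)`, and
coefficients satisfying `2βm b_m = (m-1+ρ)(m-2+ρ)b_{m-1} + A₀ b_{m-1} + A₁ b_{m-2}
+ A₂ b_{m-3}`) satisfies the equation exactly up to three explicit boundary terms. -/
theorem dche_truncated_formal_origin_residual
    (Am2 Am1 A0 A1 A2 β ρ : ℂ) (hAm2 : Am2 ≠ 0)
    (hβ : β ^ 2 = -Am2) (hρ : ρ = 1 + Am1 / (2 * β)) (N : ℕ)
    (b : ℤ → ℂ) (hbm1 : b (-1) = 0) (hbm2 : b (-2) = 0)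
    (hrec : ∀ m : ℤ, 1 ≤ m → m ≤ (N : ℤ) →
      2 * β * (m : ℂ) * b m =
        ((m : ℂ) - 1 + ρ) * ((m : ℂ) - 2 + ρ) * b (m - 1) + A0 * b (m - 1) +
          A1 * b (m - 2) + A2 * b (m - 3))
    (w : ℝ → ℂ)
    (hw : ∀ z : ℝ, w z =
      Complex.exp (β / z) * ∑ m ∈ Finset.range (N + 1), b (m : ℤ) * (z : ℂ) ^ (ρ + (m : ℂ))) :
    ∀ z : ℝ, 0 < z →
      (z : ℂ) ^ 2 * deriv (deriv w) z +
        (Am2 / (z : ℂ) ^ 2 + Am1 / (z : ℂ) + A0 + A1 * (z : ℂ) + A2 * (z : ℂ) ^ 2) * w z =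
      Complex.exp (β / z) *
        (((((N : ℂ) + ρ) * ((N : ℂ) - 1 + ρ) + A0) * b (N : ℤ) +
            A1 * b ((N : ℤ) - 1) + A2 * b ((N : ℤ) - 2)) * (z : ℂ) ^ (ρ + (N : ℂ)) +
          (A1 * b (N : ℤ) + A2 * b ((N : ℤ) - 1)) * (z : ℂ) ^ (ρ + (N : ℂ) + 1) +
          A2 * b (N : ℤ) * (z : ℂ) ^ (ρ + (N : ℂ) + 2)) := by
  have hβ0 : β ≠ 0 := by
    intro h
    apply hAm2
    rw [h] at hβ
    simpa [eq_comm, neg_eq_zero] using hβ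
  have hAm2' : Am2 = -β ^ 2 := by linear_combination hβ
  have hAm1' : Am1 = 2 * β * ρ - 2 * β := by
    rw [hρ]; field_simp; ring
  have hwf : w = fun z : ℝ =>
      Complex.exp (β / z) * ∑ m ∈ Finset.range (N + 1), b (m : ℤ) * (z : ℂ) ^ (ρ + (m : ℂ)) :=
    funext hw
  subst hwf
  -- first derivative
  have hW1 : ∀ y : ℝ, 0 < y →
      HasDerivAt (fun t : ℝ =>
          Complex.exp (β / t) * ∑ m ∈ Finset.range (N + 1), b (m : ℤ) * (t : ℂ) ^ (ρ + (m : ℂ)))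
        (Complex.exp (β / y) * ∑ m ∈ Finset.range (N + 1),
          b (m : ℤ) * (-β * (y : ℂ) ^ (ρ + (m : ℂ) - 2)
            + (ρ + (m : ℂ)) * (y : ℂ) ^ (ρ + (m : ℂ) - 1))) y := by
    intro y hy
    have hy0 : (y : ℂ) ≠ 0 := Complex.ofReal_ne_zero.mpr hy.ne'
    have hS0d : HasDerivAt
        (fun t : ℝ => ∑ m ∈ Finset.range (N + 1), b (m : ℤ) * (t : ℂ) ^ (ρ + (m : ℂ)))
        (∑ m ∈ Finset.range (N + 1),
          b (m : ℤ) * ((ρ + (m : ℂ)) * (y : ℂ) ^ (ρ + (m : ℂ) - 1))) y :=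
      HasDerivAt.fun_sum fun m _ =>
        (dche_hasDerivAt_ofReal_cpow' (ρ + (m : ℂ)) hy.ne').const_mul (b (m : ℤ))
    have h := (dche_hasDerivAt_cexp_div β hy.ne').fun_mul hS0d
    convert h using 1
    · rfl
    rw [Finset.mul_sum]
    have hsplit : ∀ m : ℕ, m ∈ Finset.range (N + 1) →
        Complex.exp (β / y) * (b (m : ℤ) * (-β * (y : ℂ) ^ (ρ + (m : ℂ) - 2)
            + (ρ + (m : ℂ)) * (y : ℂ) ^ (ρ + (m : ℂ) - 1)))
        = Complex.exp (β / y) * (-β / (y:ℂ)^2) * (b (m : ℤ) * (y : ℂ) ^ (ρ + (m : ℂ)))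
          + Complex.exp (β / y) * (b (m : ℤ) * ((ρ + (m : ℂ)) * (y : ℂ) ^ (ρ + (m : ℂ) - 1))) := by
      intro m _
      have hc : (y : ℂ) ^ (ρ + (m : ℂ)) = (y : ℂ) ^ (ρ + (m : ℂ) - 2) * (y : ℂ) ^ (2 : ℕ) := by
        rw [← Complex.cpow_natCast (y : ℂ) 2, ← Complex.cpow_add _ _ hy0]
        norm_num
      rw [hc]
      field_simp
    rw [Finset.sum_congr rfl hsplit, Finset.sum_add_distrib, ← Finset.mul_sum, ← Finset.mul_sum]
  -- second derivative of the inner part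
  have hW2 : ∀ y : ℝ, 0 < y →
      HasDerivAt (fun t : ℝ =>
          Complex.exp (β / t) * ∑ m ∈ Finset.range (N + 1),
            b (m : ℤ) * (-β * (t : ℂ) ^ (ρ + (m : ℂ) - 2)
              + (ρ + (m : ℂ)) * (t : ℂ) ^ (ρ + (m : ℂ) - 1)))
        (Complex.exp (β / y) * (-β / (y : ℂ) ^ 2)
            * ∑ m ∈ Finset.range (N + 1),
              b (m : ℤ) * (-β * (y : ℂ) ^ (ρ + (m : ℂ) - 2)
                + (ρ + (m : ℂ)) * (y : ℂ) ^ (ρ + (m : ℂ) - 1))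
          + Complex.exp (β / y) * ∑ m ∈ Finset.range (N + 1),
              b (m : ℤ) * (-β * ((ρ + (m : ℂ) - 2) * (y : ℂ) ^ (ρ + (m : ℂ) - 2 - 1))
                + (ρ + (m : ℂ)) * ((ρ + (m : ℂ) - 1) * (y : ℂ) ^ (ρ + (m : ℂ) - 1 - 1)))) y := by
    intro y hy
    have hS1d : HasDerivAt
        (fun t : ℝ => ∑ m ∈ Finset.range (N + 1),
          b (m : ℤ) * (-β * (t : ℂ) ^ (ρ + (m : ℂ) - 2)
            + (ρ + (m : ℂ)) * (t : ℂ) ^ (ρ + (m : ℂ) - 1)))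
        (∑ m ∈ Finset.range (N + 1),
          b (m : ℤ) * (-β * ((ρ + (m : ℂ) - 2) * (y : ℂ) ^ (ρ + (m : ℂ) - 2 - 1))
            + (ρ + (m : ℂ)) * ((ρ + (m : ℂ) - 1) * (y : ℂ) ^ (ρ + (m : ℂ) - 1 - 1)))) y :=
      HasDerivAt.fun_sum fun m _ =>
        (((dche_hasDerivAt_ofReal_cpow' (ρ + (m : ℂ) - 2) hy.ne').const_mul (-β)).add
          ((dche_hasDerivAt_ofReal_cpow' (ρ + (m : ℂ) - 1) hy.ne').const_mul
            (ρ + (m : ℂ)))).const_mul (b (m : ℤ))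
    exact (dche_hasDerivAt_cexp_div β hy.ne').fun_mul hS1d
  intro z hz
  have hx0 : (z : ℂ) ≠ 0 := Complex.ofReal_ne_zero.mpr hz.ne'
  -- identify deriv and deriv (deriv)
  have hdw : deriv (fun t : ℝ =>
      Complex.exp (β / t) * ∑ m ∈ Finset.range (N + 1), b (m : ℤ) * (t : ℂ) ^ (ρ + (m : ℂ)))
      =ᶠ[nhds z] fun y : ℝ =>
        Complex.exp (β / y) * ∑ m ∈ Finset.range (N + 1),
          b (m : ℤ) * (-β * (y : ℂ) ^ (ρ + (m : ℂ) - 2)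
            + (ρ + (m : ℂ)) * (y : ℂ) ^ (ρ + (m : ℂ) - 1)) := by
    filter_upwards [Ioi_mem_nhds hz] with y hy
    exact (hW1 y hy).deriv
  have hdd := hdw.deriv_eq
  rw [hdd, (hW2 z hz).deriv]
  -- now pure algebra
  have hP : ∀ (c : ℂ) (k : ℕ), c = (ρ - 4) + (k : ℂ) →
      (z : ℂ) ^ c = (z : ℂ) ^ (ρ - 4) * (z : ℂ) ^ k := by
    intro c k h
    rw [h, Complex.cpow_add _ _ hx0, Complex.cpow_natCast]
  set P : ℂ := (z : ℂ) ^ (ρ - 4) with hPdef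
  have key : (z : ℂ) ^ 2 *
        (Complex.exp (β / z) * (-β / (z : ℂ) ^ 2)
            * ∑ m ∈ Finset.range (N + 1),
              b (m : ℤ) * (-β * (z : ℂ) ^ (ρ + (m : ℂ) - 2)
                + (ρ + (m : ℂ)) * (z : ℂ) ^ (ρ + (m : ℂ) - 1))
          + Complex.exp (β / z) * ∑ m ∈ Finset.range (N + 1),
              b (m : ℤ) * (-β * ((ρ + (m : ℂ) - 2) * (z : ℂ) ^ (ρ + (m : ℂ) - 2 - 1))
                + (ρ + (m : ℂ)) * ((ρ + (m : ℂ) - 1) * (z : ℂ) ^ (ρ + (m : ℂ) - 1 - 1)))) +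
      (Am2 / (z : ℂ) ^ 2 + Am1 / (z : ℂ) + A0 + A1 * (z : ℂ) + A2 * (z : ℂ) ^ 2) *
        (Complex.exp (β / z) * ∑ m ∈ Finset.range (N + 1), b (m : ℤ) * (z : ℂ) ^ (ρ + (m : ℂ)))
      = Complex.exp (β / z) * ∑ m ∈ Finset.range (N + 1),
          ((-(2 * β * (m : ℂ))) * b (m : ℤ) * P * (z : ℂ) ^ (m + 3)
            + (((m : ℂ) + ρ) * ((m : ℂ) - 1 + ρ) + A0) * b (m : ℤ) * P * (z : ℂ) ^ (m + 4)
            + A1 * b (m : ℤ) * P * (z : ℂ) ^ (m + 5)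
            + A2 * b (m : ℤ) * P * (z : ℂ) ^ (m + 6)) := by
    simp only [Finset.mul_sum, mul_add, ← Finset.sum_add_distrib]
    refine Finset.sum_congr rfl fun m _ => ?_
    rw [hP (ρ + (m : ℂ) - 2) (m + 2) (by push_cast; ring),
        hP (ρ + (m : ℂ) - 1) (m + 3) (by push_cast; ring),
        hP (ρ + (m : ℂ) - 2 - 1) (m + 1) (by push_cast; ring),
        hP (ρ + (m : ℂ) - 1 - 1) (m + 2) (by push_cast; ring),
        hP (ρ + (m : ℂ)) (m + 4) (by push_cast; ring)]
    rw [hAm2', hAm1']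
    field_simp
    ring
  rw [hw z, key, dche_tele_aux β ρ A0 A1 A2 P (z : ℂ) b hbm1 hbm2 N hrec N le_rfl]
  rw [hP (ρ + (N : ℂ)) (N + 4) (by push_cast; ring),
      hP (ρ + (N : ℂ) + 1) (N + 5) (by push_cast; ring),
      hP (ρ + (N : ℂ) + 2) (N + 6) (by push_cast; ring)]
  ring
end

section
/- For every nonzero complex number z, the doubly infinite series Σ_{n∈ℤ} ĉ_n z^n converges absolutely and its sum equals exp(-1/z - z/2), where ĉ_n = (-1)^n Σ_{m=0}^{∞} 2^{-m-n}/(m!(m+n)!) for n ≥ 0 and ĉ_n = (-1)^n Σ_{m=0}^{∞} 2^{-m}/(m!(m-n)!) for n < 0 (all these series of nonnegative-denominator terms converge). -/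
open NormedSpace in
private lemma hasSum_cexp (x : ℂ) :
    HasSum (fun n : ℕ => x ^ n / n.factorial) (Complex.exp x) := by
  rw [Complex.exp_eq_exp_ℂ]
  exact expSeries_div_hasSum_exp x

private def intNatEquiv : ℤ × ℕ ≃ ℕ × ℕ where
  toFun p := if 0 ≤ p.1 then (p.2, p.2 + p.1.toNat) else (p.2 + (-p.1).toNat, p.2)
  invFun q := ((q.2 : ℤ) - (q.1 : ℤ), min q.1 q.2)
  left_inv := by
    rintro ⟨n, m⟩
    by_cases h : 0 ≤ n <;> simp only [h, if_pos, if_neg, not_false_iff] <;>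
      rw [Prod.ext_iff] <;> constructor <;> simp <;> omega
  right_inv := by
    rintro ⟨j, k⟩
    by_cases h : (0 : ℤ) ≤ (k : ℤ) - (j : ℤ) <;>
      simp only [h, if_pos, if_neg, not_false_iff] <;>
      rw [Prod.ext_iff] <;> constructor <;> simp <;> omega

private lemma inner_summable (a : ℤ) (t : ℕ) :
    Summable (fun m : ℕ => (2 : ℂ) ^ (-(m : ℤ) + a) /
      ((Nat.factorial m : ℂ) * (Nat.factorial (m + t) : ℂ))) := by
  apply Summable.of_norm
  refine Summable.of_nonneg_of_le (fun m => norm_nonneg _) ?_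
    ((summable_geometric_of_lt_one (r := (2⁻¹ : ℝ)) (by norm_num) (by norm_num)).mul_left ((2 : ℝ) ^ a))
  intro m
  have hd : (1 : ℝ) ≤ (m.factorial : ℝ) * ((m + t).factorial : ℝ) := by
    have h1 : (1 : ℝ) ≤ (m.factorial : ℝ) := by exact_mod_cast m.factorial_pos
    have h2 : (1 : ℝ) ≤ ((m + t).factorial : ℝ) := by exact_mod_cast (m + t).factorial_pos
    nlinarith
  have hnorm : ‖(2 : ℂ) ^ (-(m : ℤ) + a) /
      ((m.factorial : ℂ) * ((m + t).factorial : ℂ))‖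
      = (2 : ℝ) ^ (-(m : ℤ) + a) / ((m.factorial : ℝ) * ((m + t).factorial : ℝ)) := by
    rw [norm_div, norm_zpow, norm_mul]
    simp [Complex.norm_natCast]
  rw [hnorm]
  have hub : (2 : ℝ) ^ (-(m : ℤ) + a) = (2 : ℝ) ^ a * (2⁻¹ : ℝ) ^ m := by
    rw [zpow_add₀ (by norm_num : (2:ℝ) ≠ 0), zpow_neg, zpow_natCast, inv_pow]
    ring
  calc (2 : ℝ) ^ (-(m : ℤ) + a) / ((m.factorial : ℝ) * ((m + t).factorial : ℝ))
      ≤ (2 : ℝ) ^ (-(m : ℤ) + a) := div_le_self (zpow_nonneg (by norm_num) _) hd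
    _ = (2 : ℝ) ^ a * (2⁻¹ : ℝ) ^ m := hub

private lemma key_nonneg (z : ℂ) (hz : z ≠ 0) (t m : ℕ) :
    (-z⁻¹) ^ m / m.factorial * ((-z / 2) ^ (m + t) / (m + t).factorial) =
      ((-1 : ℂ) ^ t * z ^ t) * ((2 : ℂ) ^ (-(m : ℤ) - (t : ℤ)) /
        ((m.factorial : ℂ) * ((m + t).factorial : ℂ))) := by
  have h2 : (2 : ℂ) ^ (-(m : ℤ) - (t : ℤ)) = ((2 : ℂ) ^ (m + t))⁻¹ := by
    rw [← zpow_natCast (2 : ℂ) (m + t), ← zpow_neg]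
    congr 1; push_cast; ring
  rw [h2]
  have hm : (m.factorial : ℂ) ≠ 0 := Nat.cast_ne_zero.2 m.factorial_ne_zero
  have hmt : ((m + t).factorial : ℂ) ≠ 0 := Nat.cast_ne_zero.2 (m + t).factorial_ne_zero
  have h2n : ((2 : ℂ) ^ (m + t)) ≠ 0 := pow_ne_zero _ two_ne_zero
  have hsgn : (-1 : ℂ) ^ (m + (m + t)) = (-1 : ℂ) ^ t := by
    rw [pow_add, pow_add, ← mul_assoc, ← mul_pow]
    norm_num
  have hmain : (-z⁻¹) ^ m * (-z / 2) ^ (m + t)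
      = (-1 : ℂ) ^ t * (z ^ t * ((2 : ℂ) ^ (m + t))⁻¹) := by
    have e1 : (-z⁻¹) = (-1 : ℂ) * z⁻¹ := by ring
    have e2 : (-z / 2) = (-1 : ℂ) * (z / 2) := by ring
    rw [e1, e2, mul_pow, mul_pow]
    have e3 : (z⁻¹) ^ m * (z / 2) ^ (m + t) = z ^ t * ((2 : ℂ) ^ (m + t))⁻¹ := by
      rw [inv_pow, div_pow, pow_add z m t]
      field_simp
    calc (-1 : ℂ) ^ m * z⁻¹ ^ m * ((-1 : ℂ) ^ (m + t) * (z / 2) ^ (m + t))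
        = ((-1 : ℂ) ^ m * (-1 : ℂ) ^ (m + t)) * (z⁻¹ ^ m * (z / 2) ^ (m + t)) := by ring
      _ = (-1 : ℂ) ^ (m + (m + t)) * (z ^ t * ((2 : ℂ) ^ (m + t))⁻¹) := by
          rw [pow_add (-1 : ℂ) m (m + t), e3]
      _ = (-1 : ℂ) ^ t * (z ^ t * ((2 : ℂ) ^ (m + t))⁻¹) := by rw [hsgn]
  calc (-z⁻¹) ^ m / m.factorial * ((-z / 2) ^ (m + t) / (m + t).factorial)
      = ((-z⁻¹) ^ m * (-z / 2) ^ (m + t)) / ((m.factorial : ℂ) * ((m + t).factorial : ℂ)) := by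
        ring
    _ = ((-1 : ℂ) ^ t * (z ^ t * ((2 : ℂ) ^ (m + t))⁻¹)) /
        ((m.factorial : ℂ) * ((m + t).factorial : ℂ)) := by rw [hmain]
    _ = ((-1 : ℂ) ^ t * z ^ t) * (((2 : ℂ) ^ (m + t))⁻¹ /
        ((m.factorial : ℂ) * ((m + t).factorial : ℂ))) := by ring

private lemma key_neg (z : ℂ) (hz : z ≠ 0) (s m : ℕ) :
    (-z⁻¹) ^ (m + s) / (m + s).factorial * ((-z / 2) ^ m / m.factorial) =
      (((-1 : ℂ) ^ s)⁻¹ * (z ^ s)⁻¹) * ((2 : ℂ) ^ (-(m : ℤ)) /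
        ((m.factorial : ℂ) * ((m + s).factorial : ℂ))) := by
  have h2 : (2 : ℂ) ^ (-(m : ℤ)) = ((2 : ℂ) ^ m)⁻¹ := by
    rw [← zpow_natCast (2 : ℂ) m, ← zpow_neg]
  rw [h2]
  have hinv : ((-1 : ℂ) ^ s)⁻¹ = (-1 : ℂ) ^ s := by
    rw [← inv_pow, inv_neg, inv_one]
  rw [hinv]
  have hsgn : (-1 : ℂ) ^ ((m + s) + m) = (-1 : ℂ) ^ s := by
    rw [pow_add, pow_add, mul_comm ((-1:ℂ)^m) ((-1:ℂ)^s), mul_assoc, ← mul_pow]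
    norm_num
  have hmain : (-z⁻¹) ^ (m + s) * (-z / 2) ^ m
      = (-1 : ℂ) ^ s * ((z ^ s)⁻¹ * ((2 : ℂ) ^ m)⁻¹) := by
    have e1 : (-z⁻¹) = (-1 : ℂ) * z⁻¹ := by ring
    have e2 : (-z / 2) = (-1 : ℂ) * (z / 2) := by ring
    rw [e1, e2, mul_pow, mul_pow]
    have e3 : (z⁻¹) ^ (m + s) * (z / 2) ^ m = (z ^ s)⁻¹ * ((2 : ℂ) ^ m)⁻¹ := by
      rw [inv_pow, div_pow, pow_add z m s]
      field_simp
    calc (-1 : ℂ) ^ (m + s) * z⁻¹ ^ (m + s) * ((-1 : ℂ) ^ m * (z / 2) ^ m)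
        = ((-1 : ℂ) ^ (m + s) * (-1 : ℂ) ^ m) * (z⁻¹ ^ (m + s) * (z / 2) ^ m) := by ring
      _ = (-1 : ℂ) ^ ((m + s) + m) * ((z ^ s)⁻¹ * ((2 : ℂ) ^ m)⁻¹) := by
          rw [pow_add (-1 : ℂ) (m + s) m, e3]
      _ = (-1 : ℂ) ^ s * ((z ^ s)⁻¹ * ((2 : ℂ) ^ m)⁻¹) := by rw [hsgn]
  calc (-z⁻¹) ^ (m + s) / (m + s).factorial * ((-z / 2) ^ m / m.factorial)
      = ((-z⁻¹) ^ (m + s) * (-z / 2) ^ m) / ((m.factorial : ℂ) * ((m + s).factorial : ℂ)) := by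
        ring
    _ = ((-1 : ℂ) ^ s * ((z ^ s)⁻¹ * ((2 : ℂ) ^ m)⁻¹)) /
        ((m.factorial : ℂ) * ((m + s).factorial : ℂ)) := by rw [hmain]
    _ = ((-1 : ℂ) ^ s * (z ^ s)⁻¹) * (((2 : ℂ) ^ m)⁻¹ /
        ((m.factorial : ℂ) * ((m + s).factorial : ℂ))) := by ring

set_option maxHeartbeats 1000000 in
/-- with `ĉ_n = (-1)^n Σ_{m=0}^∞ 2^{-m-n}/(m!(m+n)!)` for `n ≥ 0` and
`ĉ_n = (-1)^n Σ_{m=0}^∞ 2^{-m}/(m!(m-n)!)` for `n < 0` (all these inner series converge),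
the doubly infinite series `Σ_{n∈ℤ} ĉ_n z^n` converges absolutely for every `z ≠ 0`
and its sum is `exp(-1/z - z/2)`. -/
theorem heaviside_type_expansion
    (c : ℤ → ℂ)
    (hc_nonneg : ∀ n : ℤ, 0 ≤ n → c n =
      (-1 : ℂ) ^ n * ∑' m : ℕ, (2 : ℂ) ^ (-(m : ℤ) - n) /
        ((Nat.factorial m : ℂ) * (Nat.factorial (m + n.toNat) : ℂ)))
    (hc_neg : ∀ n : ℤ, n < 0 → c n =
      (-1 : ℂ) ^ n * ∑' m : ℕ, (2 : ℂ) ^ (-(m : ℤ)) /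
        ((Nat.factorial m : ℂ) * (Nat.factorial (m + (-n).toNat) : ℂ))) :
    (∀ n : ℤ, 0 ≤ n → Summable (fun m : ℕ => (2 : ℂ) ^ (-(m : ℤ) - n) /
      ((Nat.factorial m : ℂ) * (Nat.factorial (m + n.toNat) : ℂ)))) ∧
    (∀ n : ℤ, n < 0 → Summable (fun m : ℕ => (2 : ℂ) ^ (-(m : ℤ)) /
      ((Nat.factorial m : ℂ) * (Nat.factorial (m + (-n).toNat) : ℂ)))) ∧
    ∀ z : ℂ, z ≠ 0 →
      Summable (fun n : ℤ => ‖c n * z ^ n‖) ∧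
      HasSum (fun n : ℤ => c n * z ^ n) (Complex.exp (-z⁻¹ - z / 2)) := by
  have hsum1 : ∀ n : ℤ, 0 ≤ n → Summable (fun m : ℕ => (2 : ℂ) ^ (-(m : ℤ) - n) /
      ((Nat.factorial m : ℂ) * (Nat.factorial (m + n.toNat) : ℂ))) := by
    intro n hn
    have := inner_summable (-n) n.toNat
    simpa [sub_eq_add_neg] using this
  have hsum2 : ∀ n : ℤ, n < 0 → Summable (fun m : ℕ => (2 : ℂ) ^ (-(m : ℤ)) /
      ((Nat.factorial m : ℂ) * (Nat.factorial (m + (-n).toNat) : ℂ))) := by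
    intro n hn
    have := inner_summable 0 (-n).toNat
    simpa using this
  refine ⟨hsum1, hsum2, ?_⟩
  intro z hz
  set F : ℕ × ℕ → ℂ := fun q =>
    (-z⁻¹) ^ q.1 / q.1.factorial * ((-z / 2) ^ q.2 / q.2.factorial) with hFdef
  -- norm summability over ℕ × ℕ
  have h1 : Summable (fun j : ℕ => ‖(-z⁻¹) ^ j / (j.factorial : ℂ)‖) := by
    refine (Real.summable_pow_div_factorial ‖z⁻¹‖).congr fun j => ?_
    simp [norm_div, norm_pow]
  have h2 : Summable (fun k : ℕ => ‖(-z / 2) ^ k / (k.factorial : ℂ)‖) := by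
    refine (Real.summable_pow_div_factorial ‖-z / 2‖).congr fun k => ?_
    simp [norm_div, norm_pow]
  have hnormF : Summable (fun q : ℕ × ℕ => ‖F q‖) := by
    have := h1.mul_norm h2
    exact this
  have hFsum : HasSum F (Complex.exp (-z⁻¹) * Complex.exp (-z / 2)) := by
    have := (hasSum_cexp (-z⁻¹)).mul (hasSum_cexp (-z / 2)) hnormF.of_norm
    exact this
  -- transported to ℤ × ℕ
  have hGsum : HasSum (F ∘ intNatEquiv) (Complex.exp (-z⁻¹) * Complex.exp (-z / 2)) :=
    (intNatEquiv.hasSum_iff).2 hFsum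
  have hGnorm : Summable (fun p : ℤ × ℕ => ‖F (intNatEquiv p)‖) :=
    (intNatEquiv.summable_iff).2 hnormF
  -- fiberwise sums
  have hfiber : ∀ n : ℤ, HasSum (fun m : ℕ => F (intNatEquiv (n, m))) (c n * z ^ n) := by
    intro n
    rcases le_or_gt 0 n with hn | hn
    · obtain ⟨t, rfl⟩ : ∃ t : ℕ, n = (t : ℤ) := ⟨n.toNat, (Int.toNat_of_nonneg hn).symm⟩
      have he : ∀ m : ℕ, intNatEquiv ((t : ℤ), m) = (m, m + t) := by
        intro m
        simp [intNatEquiv]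
      have hkey : ∀ m : ℕ, F (intNatEquiv ((t : ℤ), m)) =
          ((-1 : ℂ) ^ t * z ^ t) * ((2 : ℂ) ^ (-(m : ℤ) - (t : ℤ)) /
            ((m.factorial : ℂ) * ((m + t).factorial : ℂ))) := by
        intro m
        rw [he m, hFdef]
        exact key_nonneg z hz t m
      refine HasSum.congr_fun ?_ (fun m => hkey m)
      have hsumt := hsum1 (t : ℤ) (by positivity)
      simp only [Int.toNat_natCast] at hsumt
      have hmul := hsumt.hasSum.mul_left ((-1 : ℂ) ^ t * z ^ t)
      have hval : c (t : ℤ) * z ^ (t : ℤ) = ((-1 : ℂ) ^ t * z ^ t) *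
          ∑' m : ℕ, (2 : ℂ) ^ (-(m : ℤ) - (t : ℤ)) /
            ((m.factorial : ℂ) * ((m + t).factorial : ℂ)) := by
        rw [hc_nonneg (t : ℤ) (by positivity), zpow_natCast, zpow_natCast]
        simp only [Int.toNat_natCast]
        ring
      rw [hval]
      exact hmul
    · obtain ⟨s, hs0, rfl⟩ : ∃ s : ℕ, 0 < s ∧ n = -(s : ℤ) :=
        ⟨(-n).toNat, by omega, by omega⟩
      have hts : (-(-(s : ℤ))).toNat = s := by omega
      have he : ∀ m : ℕ, intNatEquiv (-(s : ℤ), m) = (m + s, m) := by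
        intro m
        have : ¬ (0 : ℤ) ≤ -(s : ℤ) := by omega
        simp [intNatEquiv, this, hts]
      have hkey : ∀ m : ℕ, F (intNatEquiv (-(s : ℤ), m)) =
          (((-1 : ℂ) ^ s)⁻¹ * (z ^ s)⁻¹) * ((2 : ℂ) ^ (-(m : ℤ)) /
            ((m.factorial : ℂ) * ((m + s).factorial : ℂ))) := by
        intro m
        rw [he m, hFdef]
        exact key_neg z hz s m
      refine HasSum.congr_fun ?_ (fun m => hkey m)
      have hsums := hsum2 (-(s : ℤ)) hn
      simp only [hts] at hsums
      have hmul := hsums.hasSum.mul_left (((-1 : ℂ) ^ s)⁻¹ * (z ^ s)⁻¹)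
      have hval : c (-(s : ℤ)) * z ^ (-(s : ℤ)) = (((-1 : ℂ) ^ s)⁻¹ * (z ^ s)⁻¹) *
          ∑' m : ℕ, (2 : ℂ) ^ (-(m : ℤ)) /
            ((m.factorial : ℂ) * ((m + s).factorial : ℂ)) := by
        rw [hc_neg (-(s : ℤ)) hn, zpow_neg, zpow_natCast, zpow_neg, zpow_natCast]
        simp only [hts]
        ring
      rw [hval]
      exact hmul
  constructor
  · -- absolute summability over ℤ
    have hfibnorm : ∀ n : ℤ, Summable (fun m : ℕ => ‖F (intNatEquiv (n, m))‖) := by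
      intro n
      exact hGnorm.prod_factor n
    have hgsum : Summable (fun n : ℤ => ∑' m : ℕ, ‖F (intNatEquiv (n, m))‖) :=
      (hGnorm.hasSum.prod_fiberwise (fun n => (hfibnorm n).hasSum)).summable
    refine Summable.of_nonneg_of_le (fun n => norm_nonneg _) (fun n => ?_) hgsum
    calc ‖c n * z ^ n‖ = ‖∑' m : ℕ, F (intNatEquiv (n, m))‖ := by
          rw [(hfiber n).tsum_eq]
      _ ≤ ∑' m : ℕ, ‖F (intNatEquiv (n, m))‖ := norm_tsum_le_tsum_norm (hfibnorm n)
  · -- the sum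
    have := hGsum.prod_fiberwise hfiber
    have hexp : Complex.exp (-z⁻¹) * Complex.exp (-z / 2) = Complex.exp (-z⁻¹ - z / 2) := by
      rw [← Complex.exp_add]
      ring_nf
    rwa [hexp] at this
end

section
/- Let α, β, γ, δ ∈ ℂ and suppose y : (-1,1) → ℂ is twice differentiable and satisfies the Jaffé–Lay form of the DCHE: y''(t) - [(α + 2t + αt² - 2t³)/(t²-1)²]·y'(t) + [(δ + (2α+γ)t + βt²)/(t²-1)³]·y(t) = 0 for all t ∈ (-1,1). Define, for z > 0, w(z) = z^{1/2}·exp( -(α/8)(z - 1/z) )·y((z-1)/(z+1)). Then w satisfies z² w''(z) + (Σ_{p=-2}^{2} A_p z^p) w(z) = 0 for all z > 0, with A_{-2} = -α²/64, A_{-1} = (γ - β - δ)/16, A_0 = (8 - α² + 4(β - δ))/32, A_1 = (-γ - β - δ)/16, A_2 = -α²/64. -/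
open Complex Set

lemma aux_mem {x : ℝ} (hx : 0 < x) : (x - 1) / (x + 1) ∈ Set.Ioo (-1 : ℝ) 1 := by
  have h1 : (0:ℝ) < x + 1 := by linarith
  refine ⟨?_, ?_⟩
  · rw [lt_div_iff₀ h1]; linarith
  · rw [div_lt_one h1]; linarith

lemma aux_f {x : ℝ} (hx : 0 < x) :
    HasDerivAt (fun x : ℝ => (x - 1) / (x + 1)) (2 / (x + 1) ^ 2) x := by
  have h1 : x + 1 ≠ 0 := by positivity
  have := ((hasDerivAt_id x).sub_const 1).div ((hasDerivAt_id x).add_const 1) h1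
  simp only [Pi.div_def, id_eq] at this
  refine this.congr_deriv (Eq.symm ?_)
  field_simp
  ring

lemma aux_S {x : ℝ} (hx : 0 < x) :
    HasDerivAt (fun x : ℝ => ((x ^ ((1:ℝ)/2) : ℝ) : ℂ))
      (((x ^ ((1:ℝ)/2) : ℝ) : ℂ) * (((2 * x)⁻¹ : ℝ) : ℂ)) x := by
  have h := (Real.hasDerivAt_rpow_const (p := (1:ℝ)/2) (Or.inl hx.ne')).ofReal_comp (z := x)
  convert h using 1
  have h12 : x ^ ((1:ℝ)/2 - 1) = x ^ ((1:ℝ)/2) / x := by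
    rw [Real.rpow_sub hx, Real.rpow_one]
  rw [h12]
  have hxc : (x:ℂ) ≠ 0 := by exact_mod_cast hx.ne'
  push_cast
  field_simp

lemma aux_E (α : ℂ) {x : ℝ} (hx : 0 < x) :
    HasDerivAt (fun x : ℝ => Complex.exp (-(α / 8) * ((x:ℂ) - 1 / (x:ℂ))))
      (Complex.exp (-(α / 8) * ((x:ℂ) - 1 / (x:ℂ))) * (-(α / 8) * ((1 + (x⁻¹:ℝ)^2 : ℝ) : ℂ))) x := by
  have hfe : (fun x : ℝ => Complex.exp (-(α / 8) * ((x:ℂ) - 1 / (x:ℂ))))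
      = fun x : ℝ => Complex.exp (-(α / 8) * ((x - 1/x : ℝ) : ℂ)) := by
    funext x; push_cast; ring_nf
  have hre : HasDerivAt (fun x : ℝ => x - 1/x) (1 + (x⁻¹)^2) x := by
    have h := (hasDerivAt_id x).sub (hasDerivAt_inv hx.ne')
    simp only [Pi.sub_def, id_eq] at h
    have h2 : (fun y:ℝ => y - y⁻¹) = fun y : ℝ => y - 1/y := by funext y; rw [one_div]
    rw [h2] at h
    refine h.congr_deriv (Eq.symm ?_)
    field_simp
    ring
  have h3 := ((hre.ofReal_comp).const_mul (-(α/8))).cexp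
  rw [hfe]
  convert h3 using 1
  push_cast
  ring

noncomputable def Dfun (α : ℂ) (y : ℝ → ℂ) : ℝ → ℂ := fun x =>
  ((x ^ ((1:ℝ)/2) : ℝ) : ℂ) * Complex.exp (-(α / 8) * ((x:ℂ) - 1 / (x:ℂ))) *
    (((((2*x)⁻¹ : ℝ) : ℂ) - α/8 * ((1 + (x⁻¹:ℝ)^2 : ℝ) : ℂ)) * y ((x-1)/(x+1))
      + ((2 * (((x+1)^2)⁻¹ : ℝ) : ℝ) : ℂ) * deriv y ((x-1)/(x+1)))

lemma aux1 (α : ℂ) (y : ℝ → ℂ)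
    (hy1 : ∀ t : ℝ, t ∈ Set.Ioo (-1 : ℝ) 1 → DifferentiableAt ℝ y t)
    {x : ℝ} (hx : 0 < x) :
    HasDerivAt (fun x : ℝ => ((x ^ ((1:ℝ)/2) : ℝ) : ℂ) *
        Complex.exp (-(α / 8) * ((x:ℂ) - 1 / (x:ℂ))) * y ((x-1)/(x+1)))
      (Dfun α y x) x := by
  have hW := (aux_S hx).mul (aux_E α hx)
  have hY : HasDerivAt (fun x : ℝ => y ((x-1)/(x+1)))
      ((2/(x+1)^2 : ℝ) • deriv y ((x-1)/(x+1))) x := by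
    have := HasDerivAt.scomp x ((hy1 _ (aux_mem hx)).hasDerivAt) (aux_f hx)
    simpa [Function.comp_def] using this
  have h := hW.mul hY
  simp only [Pi.mul_def] at h
  refine h.congr_deriv (Eq.symm ?_)
  simp only [Dfun, Complex.real_smul]
  push_cast
  ring

set_option maxHeartbeats 2000000 in
/-- if `y` solves the Jaffé–Lay form of the DCHE on `(-1,1)`, then
`w(z) = z^{1/2} exp(-(α/8)(z - 1/z)) y((z-1)/(z+1))` solves the derivative-free DCHE
`z² w'' + (Σ_{p=-2}^{2} A_p z^p) w = 0` on `(0,∞)` with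
`A_{-2} = -α²/64`, `A_{-1} = (γ-β-δ)/16`, `A₀ = (8-α²+4(β-δ))/32`,
`A₁ = (-γ-β-δ)/16`, `A₂ = -α²/64`. -/
theorem jaffe_lay_to_derivative_free
    (α β γ δ : ℂ)
    (y : ℝ → ℂ)
    (hy1 : ∀ t : ℝ, t ∈ Set.Ioo (-1 : ℝ) 1 → DifferentiableAt ℝ y t)
    (hy2 : ∀ t : ℝ, t ∈ Set.Ioo (-1 : ℝ) 1 → DifferentiableAt ℝ (deriv y) t)
    (hyeq : ∀ t : ℝ, t ∈ Set.Ioo (-1 : ℝ) 1 →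
      deriv (deriv y) t -
        ((α + 2 * (t : ℂ) + α * (t : ℂ) ^ 2 - 2 * (t : ℂ) ^ 3) / ((t : ℂ) ^ 2 - 1) ^ 2) *
          deriv y t +
        ((δ + (2 * α + γ) * (t : ℂ) + β * (t : ℂ) ^ 2) / ((t : ℂ) ^ 2 - 1) ^ 3) * y t = 0)
    (w : ℝ → ℂ)
    (hw : ∀ z : ℝ, w z =
      (↑(z ^ ((1 : ℝ) / 2)) : ℂ) * Complex.exp (-(α / 8) * ((z : ℂ) - 1 / (z : ℂ))) *
        y ((z - 1) / (z + 1))) :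
    ∀ z : ℝ, 0 < z →
      (z : ℂ) ^ 2 * deriv (deriv w) z +
        ((-α ^ 2 / 64) / (z : ℂ) ^ 2 + ((γ - β - δ) / 16) / (z : ℂ) +
          (8 - α ^ 2 + 4 * (β - δ)) / 32 + ((-γ - β - δ) / 16) * (z : ℂ) +
          (-α ^ 2 / 64) * (z : ℂ) ^ 2) * w z = 0 := by
  intro z hz
  have hz0 : z ≠ 0 := hz.ne'
  have hzc : (z:ℂ) ≠ 0 := by exact_mod_cast hz0
  have hz1 : z + 1 ≠ 0 := by positivity
  have hz1c : (z:ℂ) + 1 ≠ 0 := by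
    have : ((z + 1 : ℝ) : ℂ) ≠ 0 := by exact_mod_cast hz1
    push_cast at this; exact this
  have hmem := aux_mem hz
  -- deriv w agrees with Dfun near z
  have hev : deriv w =ᶠ[nhds z] Dfun α y := by
    filter_upwards [Ioi_mem_nhds hz] with x hx
    have h1 : deriv w x = deriv (fun x : ℝ => ((x ^ ((1:ℝ)/2) : ℝ) : ℂ) *
        Complex.exp (-(α / 8) * ((x:ℂ) - 1 / (x:ℂ))) * y ((x-1)/(x+1))) x :=
      Filter.EventuallyEq.deriv_eq (Filter.Eventually.of_forall hw)
    rw [h1, (aux1 α y hy1 hx).deriv]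
  rw [Filter.EventuallyEq.deriv_eq hev]
  -- second derivative of Dfun at z
  have h2x : HasDerivAt (fun x:ℝ => (2*x)⁻¹) (-2 / (2*z)^2) z := by
    have h := ((hasDerivAt_id z).const_mul 2).inv (by simp [id_eq]; positivity)
    simp only [id_eq, Pi.inv_def] at h
    refine h.congr_deriv (Eq.symm ?_)
    ring
  have hinv2 : HasDerivAt (fun x:ℝ => 1 + (x⁻¹)^2) (-2/z^3) z := by
    have h := ((hasDerivAt_inv hz0).pow 2).const_add 1
    simp only [Pi.pow_apply, Nat.cast_ofNat, Nat.add_one_sub_one, pow_one] at h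
    refine h.congr_deriv (Eq.symm ?_)
    field_simp [hzc, hz1c, hz0]
  have hc2r : HasDerivAt (fun x:ℝ => 2 * ((x+1)^2)⁻¹) (-4/(z+1)^3) z := by
    have h := ((((hasDerivAt_id z).add_const 1).pow 2).inv
      (by simp only [id_eq, Pi.pow_apply]; positivity)).const_mul 2
    simp only [id_eq, Pi.pow_apply, Pi.inv_apply] at h
    refine h.congr_deriv (Eq.symm ?_)
    field_simp [hzc, hz1c]
    ring
  have hc1 := (h2x.ofReal_comp).sub ((hinv2.ofReal_comp).const_mul (α/8))
  have hc2 := hc2r.ofReal_comp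
  have hY : HasDerivAt (fun x : ℝ => y ((x-1)/(x+1)))
      ((2/(z+1)^2 : ℝ) • deriv y ((z-1)/(z+1))) z := by
    simpa [Function.comp_def] using
      HasDerivAt.scomp z ((hy1 _ hmem).hasDerivAt) (aux_f hz)
  have hY1 : HasDerivAt (fun x : ℝ => deriv y ((x-1)/(x+1)))
      ((2/(z+1)^2 : ℝ) • deriv (deriv y) ((z-1)/(z+1))) z := by
    simpa [Function.comp_def] using
      HasDerivAt.scomp z ((hy2 _ hmem).hasDerivAt) (aux_f hz)
  have hW := (aux_S hz).mul (aux_E α hz)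
  have HD : HasDerivAt (Dfun α y) _ z := hW.mul ((hc1.mul hY).add (hc2.mul hY1))
  rw [HD.deriv, hw z]
  set t : ℝ := (z-1)/(z+1) with ht
  have heq := hyeq t hmem
  have hy2v : deriv (deriv y) t =
      ((α + 2 * (t:ℂ) + α * (t:ℂ)^2 - 2*(t:ℂ)^3)/((t:ℂ)^2-1)^2) * deriv y t
      - ((δ + (2*α+γ)*(t:ℂ) + β*(t:ℂ)^2)/((t:ℂ)^2-1)^3) * y t := by
    linear_combination heq
  rw [hy2v]
  have htc : ((t:ℝ):ℂ) = ((z:ℂ)-1)/((z:ℂ)+1) := by rw [ht]; push_cast; ring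
  rw [htc]
  have hbase : (((z:ℂ)-1)/((z:ℂ)+1))^2 - 1 = -4*(z:ℂ)/((z:ℂ)+1)^2 := by
    field_simp; ring
  have hb2 : ((((z:ℂ)-1)/((z:ℂ)+1))^2 - 1)^2 = 16*(z:ℂ)^2/((z:ℂ)+1)^4 := by
    rw [hbase, div_pow]
    congr 1 <;> ring
  have hb3 : ((((z:ℂ)-1)/((z:ℂ)+1))^2 - 1)^3 = -(64*(z:ℂ)^3)/((z:ℂ)+1)^6 := by
    rw [hbase, div_pow]
    rw [show ((-4*(z:ℂ))^3) = -(64*(z:ℂ)^3) from by ring, show (((z:ℂ)+1)^2)^3 = ((z:ℂ)+1)^6 from by ring]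
  have hP : (α + 2 * (((z:ℂ)-1)/((z:ℂ)+1)) + α * (((z:ℂ)-1)/((z:ℂ)+1))^2
        - 2 * (((z:ℂ)-1)/((z:ℂ)+1))^3) / ((((z:ℂ)-1)/((z:ℂ)+1))^2 - 1)^2
      = (((z:ℂ)+1) * (2*α*((z:ℂ)^2+1)*((z:ℂ)+1) + 8*(z:ℂ)*((z:ℂ)-1))) / (16*(z:ℂ)^2) := by
    rw [hb2]
    field_simp [hzc, hz1c]
    ring
  have hQ : (δ + (2*α+γ) * (((z:ℂ)-1)/((z:ℂ)+1)) + β * (((z:ℂ)-1)/((z:ℂ)+1))^2)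
        / ((((z:ℂ)-1)/((z:ℂ)+1))^2 - 1)^3
      = -(((z:ℂ)+1)^4 * (δ*((z:ℂ)+1)^2 + (2*α+γ)*((z:ℂ)-1)*((z:ℂ)+1) + β*((z:ℂ)-1)^2))
          / (64*(z:ℂ)^3) := by
    rw [hb3]
    field_simp [hzc, hz1c]
  rw [hP, hQ]
  simp only [Complex.real_smul, Pi.mul_apply, Pi.sub_apply]
  set S := ((z ^ ((1:ℝ)/2) : ℝ) : ℂ) with hSdef
  have hS0 : S ≠ 0 := by
    rw [hSdef]; exact_mod_cast (Real.rpow_pos_of_pos hz _).ne'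
  set E := Complex.exp (-(α / 8) * ((z:ℂ) - 1 / (z:ℂ))) with hEdef
  have hE0 : E ≠ 0 := Complex.exp_ne_zero _
  set y0 := y t
  set y1 := deriv y t
  push_cast
  field_simp [hzc, hz1c]
  ring
end
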